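/- Necessity direction of the criterion for continuous invariants (Theorem 2): Let f be a polynomial vector field on ℝⁿ whose solutions exist and are unique on [0, ∞), and let p, h ∈ ℝ[x1, …, xn] be polynomials. If the set P = {x ∈ ℝⁿ : p(x) ≥ 0} is a continuous invariant of (D, f) with D = {x ∈ ℝⁿ : h(x) > 0}, then for every x ∈ ℝⁿ with p(x) = 0 and h(x) > 0, either L^k_f p(x) = 0 for all k ≥ 1, or the least k ≥ 1 with L^k_f p(x) ≠ 0 satisfies L^k_f p(x) > 0. -/

import Mathlib

open MvPolynomial Set

/-- Lie derivatives of a polynomial `p` along the polynomial vector field `f`. -/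
noncomputable def lieDeriv {n : ℕ} (f : Fin n → MvPolynomial (Fin n) ℝ)
    (p : MvPolynomial (Fin n) ℝ) : ℕ → MvPolynomial (Fin n) ℝ
  | 0 => p
  | k + 1 => ∑ i, (pderiv i (lieDeriv f p k)) * f i

/-- Evaluation of a polynomial vector field at a point of ℝⁿ. -/
noncomputable def evalVF {n : ℕ} (f : Fin n → MvPolynomial (Fin n) ℝ)
    (x : Fin n → ℝ) : Fin n → ℝ := fun i => eval x (f i)

/-- `x : ℝ → ℝⁿ` is a solution of `ẋ = F(x)` on `[0, ∞)`. -/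
def IsSolutionOn {n : ℕ} (F : (Fin n → ℝ) → (Fin n → ℝ)) (x : ℝ → (Fin n → ℝ)) : Prop :=
  ∀ t ∈ Ici (0:ℝ), HasDerivWithinAt x (F (x t)) (Ici 0) t

/-- Solutions of `ẋ = F(x)` exist and are unique on `[0, ∞)` for every initial condition. -/
def CompleteFlow {n : ℕ} (F : (Fin n → ℝ) → (Fin n → ℝ)) : Prop :=
  (∀ x0 : Fin n → ℝ, ∃ x : ℝ → (Fin n → ℝ), x 0 = x0 ∧ IsSolutionOn F x) ∧
  (∀ x y : ℝ → (Fin n → ℝ), IsSolutionOn F x → IsSolutionOn F y → x 0 = y 0 →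
    ∀ t ∈ Ici (0:ℝ), x t = y t)

/-- `P` is a continuous invariant of `(D, F)`. -/
def IsCI {n : ℕ} (D P : Set (Fin n → ℝ)) (F : (Fin n → ℝ) → (Fin n → ℝ)) : Prop :=
  ∀ x : ℝ → (Fin n → ℝ), IsSolutionOn F x → x 0 ∈ P ∩ D →
    ∀ T ≥ (0:ℝ), (∀ t ∈ Icc (0:ℝ) T, x t ∈ D) → ∀ t ∈ Icc (0:ℝ) T, x t ∈ P

/-- Chain rule: along a solution, the derivative of `t ↦ q(x t)` is the Lie
derivative of `q` evaluated along the solution. -/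
lemma chainRule {n : ℕ} (f : Fin n → MvPolynomial (Fin n) ℝ)
    (x : ℝ → Fin n → ℝ)
    (hx : ∀ t ∈ Ici (0:ℝ), HasDerivWithinAt x ((fun i => eval (x t) (f i))) (Ici 0) t)
    (q : MvPolynomial (Fin n) ℝ) :
    ∀ t ∈ Ici (0:ℝ), HasDerivWithinAt (fun s => eval (x s) q)
      (eval (x t) (∑ i, pderiv i q * f i)) (Ici 0) t := by
  induction q using MvPolynomial.induction_on with
  | C a =>
    intro t ht
    simp only [pderiv_C, zero_mul, Finset.sum_const_zero, eval_C, map_zero]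
    exact hasDerivWithinAt_const t _ a
  | add q r hq hr =>
    intro t ht
    have := (hq t ht).add (hr t ht)
    simp only [map_add, add_mul, Finset.sum_add_distrib] at *
    exact this
  | mul_X q i hq =>
    intro t ht
    have hxi : HasDerivWithinAt (fun s => x s i) (eval (x t) (f i)) (Ici 0) t := by
      have := hx t ht
      exact (hasDerivWithinAt_pi.mp this) i
    have := (hq t ht).mul hxi
    have key : (fun s => eval (x s) (q * X i)) = fun s => eval (x s) q * x s i := by
      funext s; simp
    rw [key]
    refine this.congr_deriv ?_
    have : ∀ j, pderiv j (q * X i) = pderiv j q * X i + q * pderiv j (X i) := by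
      intro j; rw [pderiv_mul]
    simp only [this, add_mul, Finset.sum_add_distrib, map_add]
    congr 1
    · simp only [map_sum, map_mul, eval_X]
      rw [Finset.sum_mul]
      apply Finset.sum_congr rfl
      intro j _; ring
    · simp only [pderiv_X, map_sum, map_mul]
      rw [Finset.sum_eq_single i]
      · simp
      · intro b _ hb; simp [Pi.single_apply, hb]
      · simp

/-- If `g 0 ≤ 0` and the derivative of `g` is negative on `(0, δ]`, then `g` is
negative on `(0, δ]`. -/
lemma neg_on_Ioc {g g' : ℝ → ℝ} {δ : ℝ} (hδ : 0 < δ)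
    (hd : ∀ t ∈ Ici (0:ℝ), HasDerivWithinAt g (g' t) (Ici 0) t)
    (h0 : g 0 ≤ 0) (hneg : ∀ t ∈ Ioc (0:ℝ) δ, g' t < 0) :
    ∀ t ∈ Ioc (0:ℝ) δ, g t < 0 := by
  have hanti : StrictAntiOn g (Icc 0 δ) := by
    apply strictAntiOn_of_deriv_neg (convex_Icc 0 δ)
    · intro t ht
      exact ((hd t ht.1).continuousWithinAt).mono (Icc_subset_Ici_self)
    · intro t ht
      rw [interior_Icc] at ht
      have h1 : HasDerivAt g (g' t) t := by
        apply (hd t (le_of_lt ht.1)).hasDerivAt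
        exact Ici_mem_nhds ht.1
      rw [h1.deriv]
      exact hneg t ⟨ht.1, le_of_lt ht.2⟩
  intro t ht
  have := hanti ⟨le_refl 0, le_of_lt hδ⟩ ⟨le_of_lt ht.1, ht.2⟩ ht.1
  linarith

/-- A continuous-within function negative at `0` is negative on a small interval. -/
lemma neg_delta {g : ℝ → ℝ} (hc : ContinuousWithinAt g (Ici 0) 0) (h0 : g 0 < 0) :
    ∃ δ > 0, ∀ t ∈ Icc (0:ℝ) δ, g t < 0 := by
  have hev : ∀ᶠ t in nhdsWithin 0 (Ici 0), g t < 0 :=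
    hc.eventually_lt_const h0
  obtain ⟨ε, hε, hball⟩ := Metric.mem_nhdsWithin_iff.mp hev
  refine ⟨ε/2, by linarith, fun t ht => ?_⟩
  apply hball
  constructor
  · rw [Metric.mem_ball, Real.dist_eq, sub_zero, abs_of_nonneg ht.1]
    linarith [ht.2]
  · exact ht.1

lemma pos_delta {g : ℝ → ℝ} (hc : ContinuousWithinAt g (Ici 0) 0) (h0 : 0 < g 0) :
    ∃ δ > 0, ∀ t ∈ Icc (0:ℝ) δ, 0 < g t := by
  have := neg_delta (g := fun t => -g t) (hc.neg) (by simpa using h0)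
  obtain ⟨δ, hδ, hh⟩ := this
  exact ⟨δ, hδ, fun t ht => by have := hh t ht; simpa using this⟩

/-- **Necessity direction of Theorem 2.** If `{p ≥ 0}` is a continuous invariant
of `({h > 0}, f)`, then at every point of the boundary `p = 0` inside the domain
`h > 0`, either all higher-order Lie derivatives of `p` along `f` vanish, or the
first non-vanishing one is positive. -/
theorem ci_criterion_necessity {n : ℕ} (f : Fin n → MvPolynomial (Fin n) ℝ)
    (p h : MvPolynomial (Fin n) ℝ)
    (hflow : CompleteFlow (evalVF f))
    (hCI : IsCI {x | 0 < eval x h} {x | 0 ≤ eval x p} (evalVF f)) :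
    ∀ x : Fin n → ℝ, eval x p = 0 → 0 < eval x h →
      (∀ k : ℕ, 1 ≤ k → eval x (lieDeriv f p k) = 0) ∨
      (∃ k : ℕ, 1 ≤ k ∧ (∀ j : ℕ, 1 ≤ j → j < k → eval x (lieDeriv f p j) = 0) ∧
        eval x (lieDeriv f p k) ≠ 0 ∧ 0 < eval x (lieDeriv f p k)) := by
  intro x0 hp0 hh0
  by_cases hall : ∀ k : ℕ, 1 ≤ k → eval x0 (lieDeriv f p k) = 0
  · exact Or.inl hall
  right
  push_neg at hall
  have hex : ∃ k, 1 ≤ k ∧ eval x0 (lieDeriv f p k) ≠ 0 := hall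
  classical
  let k := Nat.find hex
  obtain ⟨hk1, hkne⟩ : 1 ≤ k ∧ eval x0 (lieDeriv f p k) ≠ 0 := Nat.find_spec hex
  have hmin : ∀ j : ℕ, 1 ≤ j → j < k → eval x0 (lieDeriv f p j) = 0 := by
    intro j hj1 hjk
    by_contra hne
    exact absurd (Nat.find_le ⟨hj1, hne⟩) (not_le.mpr hjk)
  refine ⟨k, hk1, hmin, hkne, ?_⟩
  by_contra hnpos
  have hkneg : eval x0 (lieDeriv f p k) < 0 := lt_of_le_of_ne (not_lt.mp hnpos) hkne
  -- get the solution through x0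
  obtain ⟨x, hx0, hxsol⟩ := hflow.1 x0
  have hxd : ∀ t ∈ Ici (0:ℝ), HasDerivWithinAt x ((fun i => eval (x t) (f i))) (Ici 0) t := by
    intro t ht; exact hxsol t ht
  -- derivative of each Lie-derivative evaluation
  have hder : ∀ j : ℕ, ∀ t ∈ Ici (0:ℝ),
      HasDerivWithinAt (fun s => eval (x s) (lieDeriv f p j))
        (eval (x t) (lieDeriv f p (j+1))) (Ici 0) t := by
    intro j t ht
    have := chainRule f x hxd (lieDeriv f p j) t ht
    simpa [lieDeriv] using this
  -- continuity at 0 and small intervals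
  have hcontk : ContinuousWithinAt (fun s => eval (x s) (lieDeriv f p k)) (Ici 0) 0 :=
    (hder k 0 self_mem_Ici).continuousWithinAt
  obtain ⟨δ1, hδ1, hk_neg⟩ := neg_delta hcontk (by rw [hx0]; exact hkneg)
  have hconth : ContinuousWithinAt (fun s => eval (x s) h) (Ici 0) 0 := by
    have : ∀ t ∈ Ici (0:ℝ), HasDerivWithinAt (fun s => eval (x s) h)
        (eval (x t) (∑ i, pderiv i h * f i)) (Ici 0) t := chainRule f x hxd h
    exact (this 0 self_mem_Ici).continuousWithinAt
  obtain ⟨δ2, hδ2, hh_pos⟩ := pos_delta hconth (by rw [hx0]; exact hh0)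
  set δ := min δ1 δ2 with hδdef
  have hδpos : 0 < δ := lt_min hδ1 hδ2
  -- downward induction: eval (x t) (lieDeriv f p (k - m)) < 0 on Ioc 0 δ
  have hneg : ∀ m : ℕ, m ≤ k → ∀ t ∈ Ioc (0:ℝ) δ, eval (x t) (lieDeriv f p (k - m)) < 0 := by
    intro m
    induction m with
    | zero =>
      intro _ t ht
      exact hk_neg t ⟨le_of_lt ht.1, le_trans ht.2 (min_le_left _ _)⟩
    | succ m ih =>
      intro hm t ht
      have hmk : m ≤ k := le_of_lt (Nat.lt_of_succ_le hm)
      have hsub : k - (m+1) + 1 = k - m := by omega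
      have h0le : eval (x 0) (lieDeriv f p (k - (m+1))) ≤ 0 := by
        rw [hx0]
        rcases Nat.eq_zero_or_pos (k - (m+1)) with h0 | hpos
        · rw [h0]; simp [lieDeriv, hp0]
        · rw [hmin _ hpos (by omega)]
      refine neg_on_Ioc (g := fun s => eval (x s) (lieDeriv f p (k - (m+1)))) (g' := fun s => eval (x s) (lieDeriv f p (k - m))) hδpos (fun s hs => ?_) h0le (fun s hs => ?_) t ht
      · have := hder (k - (m+1)) s hs
        rwa [hsub] at this
      · exact ih hmk s hs
  have hg0 : eval (x δ) p < 0 := by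
    have := hneg k (le_refl k) δ ⟨hδpos, le_refl δ⟩
    simpa [lieDeriv] using this
  -- invariance gives the contradiction
  have hmem : x 0 ∈ {x | 0 ≤ eval x p} ∩ {x | 0 < eval x h} := by
    rw [hx0]; exact ⟨le_of_eq hp0.symm, hh0⟩
  have hdom : ∀ t ∈ Icc (0:ℝ) δ, x t ∈ {x | 0 < eval x h} := by
    intro t ht
    exact hh_pos t ⟨ht.1, le_trans ht.2 (min_le_right _ _)⟩
  have := hCI x hxsol hmem δ (le_of_lt hδpos) hdom δ ⟨le_of_lt hδpos, le_refl δ⟩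
  exact absurd this (not_le.mpr hg0)
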